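/- Let a ∈ ℝ with a ∉ {0, 1}, M := {(z¹, z²) ∈ ℂ² : |Re z¹| < 1 and |z²| < 1}, and ρ_a(z¹, z²) := 2(Re z¹ + 1)^a (Re z² + 1)^{1−a}. Then at every point of M the two vectors (ρ_{11̄}, ρ_{21̄}) and (ρ_{11̄1̄}, ρ_{21̄1̄}) in ℂ² are linearly independent over ℂ; here ρ_{jk̄} := ∂²ρ_a/∂z^j∂z̄^k and ρ_{jk̄l̄} := ∂³ρ_a/∂z^j∂z̄^k∂z̄^l are iterated Wirtinger derivatives. -/

import Mathlib

/-- Wirtinger derivative `∂f/∂z^j`. -/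
noncomputable def wD {n : ℕ} (f : (Fin n → ℂ) → ℂ) (j : Fin n) (x : Fin n → ℂ) : ℂ :=
  (fderiv ℝ f x (Pi.single j 1) - Complex.I * fderiv ℝ f x (Pi.single j Complex.I)) / 2

/-- Wirtinger derivative `∂f/∂z̄^j`. -/
noncomputable def wDbar {n : ℕ} (f : (Fin n → ℂ) → ℂ) (j : Fin n) (x : Fin n → ℂ) : ℂ :=
  (fderiv ℝ f x (Pi.single j 1) + Complex.I * fderiv ℝ f x (Pi.single j Complex.I)) / 2

/-- Iterated Wirtinger derivative `f_{jk̄} = ∂²f/∂z^j∂z̄^k`. -/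
noncomputable def w2 {n : ℕ} (f : (Fin n → ℂ) → ℂ) (j k : Fin n) (x : Fin n → ℂ) : ℂ :=
  wD (fun y => wDbar f k y) j x

/-- Iterated Wirtinger derivative `f_{jk̄l̄} = ∂³f/∂z^j∂z̄^k∂z̄^l`. -/
noncomputable def w3 {n : ℕ} (f : (Fin n → ℂ) → ℂ) (j k l : Fin n) (x : Fin n → ℂ) : ℂ :=
  wDbar (fun y => w2 f j k y) l x

/-- The potential `ρ_a(z) = 2(Re z¹ + 1)^a (Re z² + 1)^{1−a}` (real powers). -/
noncomputable def rhoA (a : ℝ) (z : Fin 2 → ℂ) : ℝ :=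
  2 * ((z 0).re + 1) ^ a * ((z 1).re + 1) ^ (1 - a)

/-- `ρ_a` as a complex-valued function. -/
noncomputable def rhoAC (a : ℝ) : (Fin 2 → ℂ) → ℂ := fun z => ((rhoA a z : ℝ) : ℂ)

/-- The domain `M = {|Re z¹| < 1, |z²| < 1}`. -/
def MSet : Set (Fin 2 → ℂ) := {z | |(z 0).re| < 1 ∧ ‖z 1‖ < 1}

noncomputable def Fc (c p q : ℝ) (z : Fin 2 → ℂ) : ℂ :=
  ((c * (((z 0).re + 1) ^ p * ((z 1).re + 1) ^ q) : ℝ) : ℂ)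

noncomputable def ell (j : Fin 2) : (Fin 2 → ℂ) →L[ℝ] ℝ :=
  Complex.reCLM.comp (ContinuousLinearMap.proj j)

lemma hasF (c p q : ℝ) (z : Fin 2 → ℂ) (hx : 0 < (z 0).re + 1) (hu : 0 < (z 1).re + 1) :
    HasFDerivAt (Fc c p q)
      (Complex.ofRealCLM.comp (c • ((((z 0).re + 1) ^ p) •
          ((q * ((z 1).re + 1) ^ (q - 1)) • ell 1) +
        (((z 1).re + 1) ^ q) • ((p * ((z 0).re + 1) ^ (p - 1)) • ell 0)))) z := by
  have hl0 : HasFDerivAt (fun z : Fin 2 → ℂ => (z 0).re + 1) (ell 0) z :=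
    (ell 0).hasFDerivAt.add_const 1
  have hl1 : HasFDerivAt (fun z : Fin 2 → ℂ => (z 1).re + 1) (ell 1) z :=
    (ell 1).hasFDerivAt.add_const 1
  have hA : HasFDerivAt (fun z : Fin 2 → ℂ => ((z 0).re + 1) ^ p)
      ((p * ((z 0).re + 1) ^ (p - 1)) • ell 0) z :=
    by have := (Real.hasDerivAt_rpow_const (p := p) (Or.inl hx.ne')).comp_hasFDerivAt z hl0; exact this
  have hB : HasFDerivAt (fun z : Fin 2 → ℂ => ((z 1).re + 1) ^ q)
      ((q * ((z 1).re + 1) ^ (q - 1)) • ell 1) z :=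
    by have := (Real.hasDerivAt_rpow_const (p := q) (Or.inl hu.ne')).comp_hasFDerivAt z hl1; exact this
  exact Complex.ofRealCLM.hasFDerivAt.comp z ((hA.mul hB).const_mul c)

lemma fderiv_Fc (c p q : ℝ) (z : Fin 2 → ℂ) (hx : 0 < (z 0).re + 1) (hu : 0 < (z 1).re + 1)
    (v : Fin 2 → ℂ) :
    fderiv ℝ (Fc c p q) z v =
      ((c * (((z 0).re + 1) ^ p * (q * ((z 1).re + 1) ^ (q - 1) * (v 1).re) +
        ((z 1).re + 1) ^ q * (p * ((z 0).re + 1) ^ (p - 1) * (v 0).re)) : ℝ) : ℂ) := by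
  rw [(hasF c p q z hx hu).fderiv]
  simp [ell, smul_eq_mul]
  ring

lemma wD_Fc0 (c p q : ℝ) (z : Fin 2 → ℂ) (hx : 0 < (z 0).re + 1) (hu : 0 < (z 1).re + 1) :
    wD (Fc c p q) 0 z = Fc (c * p / 2) (p - 1) q z := by
  unfold wD
  rw [fderiv_Fc c p q z hx hu, fderiv_Fc c p q z hx hu]
  simp only [Fc, Pi.single_apply, ne_eq, Fin.isValue, if_true, if_false, reduceIte,
    one_ne_zero, zero_ne_one, Fin.zero_eq_one_iff, Fin.one_eq_zero_iff, Complex.one_re,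
    Complex.I_re, Complex.zero_re, Complex.ofReal_zero]
  push_cast
  ring

lemma wDbar_Fc0 (c p q : ℝ) (z : Fin 2 → ℂ) (hx : 0 < (z 0).re + 1) (hu : 0 < (z 1).re + 1) :
    wDbar (Fc c p q) 0 z = Fc (c * p / 2) (p - 1) q z := by
  unfold wDbar
  rw [fderiv_Fc c p q z hx hu, fderiv_Fc c p q z hx hu]
  simp only [Fc, Pi.single_apply, ne_eq, Fin.isValue, if_true, if_false, reduceIte,
    one_ne_zero, zero_ne_one, Fin.zero_eq_one_iff, Fin.one_eq_zero_iff, Complex.one_re,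
    Complex.I_re, Complex.zero_re, Complex.ofReal_zero]
  push_cast
  ring

lemma wD_Fc1 (c p q : ℝ) (z : Fin 2 → ℂ) (hx : 0 < (z 0).re + 1) (hu : 0 < (z 1).re + 1) :
    wD (Fc c p q) 1 z = Fc (c * q / 2) p (q - 1) z := by
  unfold wD
  rw [fderiv_Fc c p q z hx hu, fderiv_Fc c p q z hx hu]
  simp only [Fc, Pi.single_apply, ne_eq, Fin.isValue, if_true, if_false, reduceIte,
    one_ne_zero, zero_ne_one, Fin.zero_eq_one_iff, Fin.one_eq_zero_iff, Complex.one_re,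
    Complex.I_re, Complex.zero_re, Complex.ofReal_zero]
  push_cast
  ring

def USet : Set (Fin 2 → ℂ) := {z | 0 < (z 0).re + 1 ∧ 0 < (z 1).re + 1}

lemma USet_open : IsOpen USet := by
  have h0 : IsOpen {z : Fin 2 → ℂ | 0 < (z 0).re + 1} :=
    isOpen_lt continuous_const ((Complex.continuous_re.comp (continuous_apply 0)).add
      continuous_const)
  have h1 : IsOpen {z : Fin 2 → ℂ | 0 < (z 1).re + 1} :=
    isOpen_lt continuous_const ((Complex.continuous_re.comp (continuous_apply 1)).add
      continuous_const)
  exact h0.inter h1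

lemma wD_congr {n : ℕ} {f g : (Fin n → ℂ) → ℂ} {j : Fin n} {x : Fin n → ℂ}
    (h : f =ᶠ[nhds x] g) : wD f j x = wD g j x := by
  unfold wD; rw [h.fderiv_eq]

lemma wDbar_congr {n : ℕ} {f g : (Fin n → ℂ) → ℂ} {j : Fin n} {x : Fin n → ℂ}
    (h : f =ᶠ[nhds x] g) : wDbar f j x = wDbar g j x := by
  unfold wDbar; rw [h.fderiv_eq]



lemma rhoAC_eq_Fc (a : ℝ) : rhoAC a = Fc 2 a (1 - a) :=
  funext fun z => congrArg Complex.ofReal (by unfold rhoA; ring)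

lemma wDbar_rho (a : ℝ) {z : Fin 2 → ℂ} (hz : z ∈ USet) :
    wDbar (rhoAC a) 0 z = Fc (2 * a / 2) (a - 1) (1 - a) z := by
  rw [rhoAC_eq_Fc]; exact wDbar_Fc0 _ _ _ _ hz.1 hz.2

lemma w2_00 (a : ℝ) {z : Fin 2 → ℂ} (hz : z ∈ USet) :
    w2 (rhoAC a) 0 0 z = Fc (2 * a / 2 * (a - 1) / 2) (a - 1 - 1) (1 - a) z := by
  unfold w2
  have hev : (fun y => wDbar (rhoAC a) 0 y) =ᶠ[nhds z] Fc (2 * a / 2) (a - 1) (1 - a) :=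
    Filter.eventuallyEq_of_mem (USet_open.mem_nhds hz) (fun y hy => wDbar_rho a hy)
  rw [wD_congr hev, wD_Fc0 _ _ _ _ hz.1 hz.2]

lemma w2_10 (a : ℝ) {z : Fin 2 → ℂ} (hz : z ∈ USet) :
    w2 (rhoAC a) 1 0 z = Fc (2 * a / 2 * (1 - a) / 2) (a - 1) (1 - a - 1) z := by
  unfold w2
  have hev : (fun y => wDbar (rhoAC a) 0 y) =ᶠ[nhds z] Fc (2 * a / 2) (a - 1) (1 - a) :=
    Filter.eventuallyEq_of_mem (USet_open.mem_nhds hz) (fun y hy => wDbar_rho a hy)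
  rw [wD_congr hev, wD_Fc1 _ _ _ _ hz.1 hz.2]

lemma w3_000 (a : ℝ) {z : Fin 2 → ℂ} (hz : z ∈ USet) :
    w3 (rhoAC a) 0 0 0 z =
      Fc (2 * a / 2 * (a - 1) / 2 * (a - 1 - 1) / 2) (a - 1 - 1 - 1) (1 - a) z := by
  unfold w3
  have hev : (fun y => w2 (rhoAC a) 0 0 y) =ᶠ[nhds z]
      Fc (2 * a / 2 * (a - 1) / 2) (a - 1 - 1) (1 - a) :=
    Filter.eventuallyEq_of_mem (USet_open.mem_nhds hz) (fun y hy => w2_00 a hy)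
  rw [wDbar_congr hev, wDbar_Fc0 _ _ _ _ hz.1 hz.2]

lemma w3_100 (a : ℝ) {z : Fin 2 → ℂ} (hz : z ∈ USet) :
    w3 (rhoAC a) 1 0 0 z =
      Fc (2 * a / 2 * (1 - a) / 2 * (a - 1) / 2) (a - 1 - 1) (1 - a - 1) z := by
  unfold w3
  have hev : (fun y => w2 (rhoAC a) 1 0 y) =ᶠ[nhds z]
      Fc (2 * a / 2 * (1 - a) / 2) (a - 1) (1 - a - 1) :=
    Filter.eventuallyEq_of_mem (USet_open.mem_nhds hz) (fun y hy => w2_10 a hy)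
  rw [wDbar_congr hev, wDbar_Fc0 _ _ _ _ hz.1 hz.2]

/-- 2-nondegeneracy of the pre-Kähler structures with potentials `ρ_a`, `a ∉ {0,1}`:
the vectors `(ρ_{11̄}, ρ_{21̄})` and `(ρ_{11̄1̄}, ρ_{21̄1̄})` are linearly independent over ℂ
at every point of `M`. -/
theorem stmt8 (a : ℝ) (ha0 : a ≠ 0) (ha1 : a ≠ 1) (z : Fin 2 → ℂ) (hz : z ∈ MSet) :
    LinearIndependent ℂ
      ![![w2 (rhoAC a) 0 0 z, w2 (rhoAC a) 1 0 z],
        ![w3 (rhoAC a) 0 0 0 z, w3 (rhoAC a) 1 0 0 z]] := by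
  have hre : |(z 1).re| ≤ ‖z 1‖ := Complex.abs_re_le_norm _
  have hzU : z ∈ USet := by
    constructor
    · have := (abs_lt.mp hz.1).1; linarith
    · have h1 : |(z 1).re| < 1 := lt_of_le_of_lt hre hz.2
      have := (abs_lt.mp h1).1; linarith
  set X := (z 0).re + 1 with hX
  set U := (z 1).re + 1 with hU
  have hx : (0:ℝ) < X := hzU.1
  have hu : (0:ℝ) < U := hzU.2
  rw [w2_00 a hzU, w2_10 a hzU, w3_000 a hzU, w3_100 a hzU]
  have hdet : (!![Fc (2*a/2*(a-1)/2) (a-1-1) (1-a) z, Fc (2*a/2*(1-a)/2) (a-1) (1-a-1) z;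
      Fc (2*a/2*(a-1)/2*(a-1-1)/2) (a-1-1-1) (1-a) z,
      Fc (2*a/2*(1-a)/2*(a-1)/2) (a-1-1) (1-a-1) z] : Matrix (Fin 2) (Fin 2) ℂ).det ≠ 0 := by
    rw [Matrix.det_fin_two_of]
    unfold Fc
    rw [← Complex.ofReal_mul, ← Complex.ofReal_mul, ← Complex.ofReal_sub]
    rw [Complex.ofReal_ne_zero]
    have hpow : X ^ (a-1) * X ^ (a-1-1-1) = X ^ (a-1-1) * X ^ (a-1-1) := by
      rw [← Real.rpow_add hx, ← Real.rpow_add hx]; ring_nf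
    have hcalc : 2*a/2*(a-1)/2 * (X ^ (a-1-1) * U ^ (1-a)) *
          (2*a/2*(1-a)/2*(a-1)/2 * (X ^ (a-1-1) * U ^ (1-a-1))) -
        2*a/2*(1-a)/2 * (X ^ (a-1) * U ^ (1-a-1)) *
          (2*a/2*(a-1)/2*(a-1-1)/2 * (X ^ (a-1-1-1) * U ^ (1-a))) =
        (-(a*(a-1))^2/8) * (X ^ (a-1-1) * X ^ (a-1-1)) * (U ^ (1-a) * U ^ (1-a-1)) := by
      linear_combination (-(2*a/2*(1-a)/2 * (2*a/2*(a-1)/2*(a-1-1)/2) *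
        (U ^ (1-a) * U ^ (1-a-1)))) * hpow
    rw [hcalc]
    have hK : (-(a*(a-1))^2/8 : ℝ) ≠ 0 := by
      have h2 : a * (a - 1) ≠ 0 := mul_ne_zero ha0 (sub_ne_zero.mpr ha1)
      exact div_ne_zero (neg_ne_zero.mpr (pow_ne_zero _ h2)) (by norm_num)
    exact mul_ne_zero (mul_ne_zero hK
        (mul_pos (Real.rpow_pos_of_pos hx _) (Real.rpow_pos_of_pos hx _)).ne')
      (mul_pos (Real.rpow_pos_of_pos hu _) (Real.rpow_pos_of_pos hu _)).ne'
  exact Matrix.linearIndependent_rows_iff_isUnit.mpr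
    ((Matrix.isUnit_iff_isUnit_det _).mpr (isUnit_iff_ne_zero.mpr hdet))
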